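/- Let A be an n×n complex matrix and let M be the 2n×2n block matrix [[0, I], [−A², 0]]. Then exp(tM) = [[cos(tA), s], [−A·sin(tA), cos(tA)]], where s equals the power series t·Σ_{k≥0} (−1)^k (t²A²)^k/(2k+1)! (i.e., s·A = sin(tA) when A is invertible). -/

import Mathlib

open NormedSpace

/-- Matrix cosine, defined by its power series. -/
noncomputable def mcos {n : Type*} [Fintype n] [DecidableEq n] (A : Matrix n n ℂ) :
    Matrix n n ℂ :=
  ∑' k : ℕ, ((-1 : ℂ) ^ k / (2 * k).factorial) • A ^ (2 * k)

/-- Matrix sine, defined by its power series. -/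
noncomputable def msin {n : Type*} [Fintype n] [DecidableEq n] (A : Matrix n n ℂ) :
    Matrix n n ℂ :=
  ∑' k : ℕ, ((-1 : ℂ) ^ k / (2 * k + 1).factorial) • A ^ (2 * k + 1)

/-- The entry `s(t,A) = t ∑_{k≥0} (-1)^k (t²A²)^k/(2k+1)!`. -/
noncomputable def sFun {n : Type*} [Fintype n] [DecidableEq n] (t : ℝ) (A : Matrix n n ℂ) :
    Matrix n n ℂ :=
  ∑' k : ℕ, ((-1 : ℂ) ^ k * (t : ℂ) ^ (2 * k + 1) / (2 * k + 1).factorial) • A ^ (2 * k)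

namespace ExpBlockAux

variable {n : Type*} [Fintype n] [DecidableEq n]

open Matrix

/-- `fromBlocks` as an additive monoid hom. -/
def fromBlocksHom : (Matrix n n ℂ × Matrix n n ℂ) × (Matrix n n ℂ × Matrix n n ℂ) →+
    Matrix (n ⊕ n) (n ⊕ n) ℂ where
  toFun x := fromBlocks x.1.1 x.1.2 x.2.1 x.2.2
  map_zero' := fromBlocks_zero
  map_add' x y := by simp [fromBlocks_add]

lemma continuous_fromBlocksHom :
    Continuous (fromBlocksHom (n := n)) := by
  apply Continuous.matrix_fromBlocks
  · exact continuous_fst.comp continuous_fst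
  · exact continuous_snd.comp continuous_fst
  · exact continuous_fst.comp continuous_snd
  · exact continuous_snd.comp continuous_snd

lemma hasSum_fromBlocks {f11 f12 f21 f22 : ℕ → Matrix n n ℂ} {a b c d : Matrix n n ℂ}
    (h11 : HasSum f11 a) (h12 : HasSum f12 b) (h21 : HasSum f21 c) (h22 : HasSum f22 d) :
    HasSum (fun k => fromBlocks (f11 k) (f12 k) (f21 k) (f22 k)) (fromBlocks a b c d) := by
  have := ((h11.prodMk h12).prodMk (h21.prodMk h22)).map
    (fromBlocksHom (n := n)) continuous_fromBlocksHom
  exact this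

/-- `toBlocks₁₂` as an additive monoid hom. -/
def tb12 : Matrix (n ⊕ n) (n ⊕ n) ℂ →+ Matrix n n ℂ where
  toFun := toBlocks₁₂
  map_zero' := rfl
  map_add' _ _ := rfl

lemma continuous_tb12 : Continuous (tb12 (n := n)) :=
  Continuous.matrix_submatrix (continuous_id (X := Matrix (n ⊕ n) (n ⊕ n) ℂ)) Sum.inl Sum.inr

/-- `toBlocks₂₁` as an additive monoid hom. -/
def tb21 : Matrix (n ⊕ n) (n ⊕ n) ℂ →+ Matrix n n ℂ where
  toFun := toBlocks₂₁
  map_zero' := rfl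
  map_add' _ _ := rfl

lemma continuous_tb21 : Continuous (tb21 (n := n)) :=
  Continuous.matrix_submatrix (continuous_id (X := Matrix (n ⊕ n) (n ⊕ n) ℂ)) Sum.inr Sum.inl

/-- `toBlocks₁₁` as an additive monoid hom. -/
def tb11 : Matrix (n ⊕ n) (n ⊕ n) ℂ →+ Matrix n n ℂ where
  toFun := toBlocks₁₁
  map_zero' := rfl
  map_add' _ _ := rfl

lemma continuous_tb11 : Continuous (tb11 (n := n)) :=
  Continuous.matrix_submatrix (continuous_id (X := Matrix (n ⊕ n) (n ⊕ n) ℂ)) Sum.inl Sum.inl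

lemma M_sq (A : Matrix n n ℂ) :
    (fromBlocks (0 : Matrix n n ℂ) (1 : Matrix n n ℂ) (-(A ^ 2)) 0) ^ 2 =
      fromBlocks (-(A ^ 2)) 0 0 (-(A ^ 2)) := by
  rw [sq, fromBlocks_multiply]
  simp

lemma diag_pow (C : Matrix n n ℂ) (k : ℕ) :
    (fromBlocks C 0 0 C : Matrix (n ⊕ n) (n ⊕ n) ℂ) ^ k = fromBlocks (C ^ k) 0 0 (C ^ k) := by
  induction k with
  | zero => simp [← fromBlocks_one]
  | succ k ih => rw [pow_succ, pow_succ, ih, fromBlocks_multiply]; simp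

lemma M_pow_even (A : Matrix n n ℂ) (k : ℕ) :
    (fromBlocks (0 : Matrix n n ℂ) (1 : Matrix n n ℂ) (-(A ^ 2)) 0) ^ (2 * k) =
      fromBlocks ((-(A ^ 2)) ^ k) 0 0 ((-(A ^ 2)) ^ k) := by
  rw [pow_mul, M_sq, diag_pow]

lemma M_pow_odd (A : Matrix n n ℂ) (k : ℕ) :
    (fromBlocks (0 : Matrix n n ℂ) (1 : Matrix n n ℂ) (-(A ^ 2)) 0) ^ (2 * k + 1) =
      fromBlocks 0 ((-(A ^ 2)) ^ k) ((-(A ^ 2)) ^ (k + 1)) 0 := by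
  rw [pow_succ, M_pow_even, fromBlocks_multiply]
  simp [pow_succ]

lemma term21 (A : Matrix n n ℂ) (t : ℂ) (k : ℕ)
    (hneg : ∀ j : ℕ, (-(A ^ 2)) ^ j = ((-1 : ℂ) ^ j) • A ^ (2 * j)) :
    -(A * (((-1 : ℂ) ^ k / (2 * k + 1).factorial) • (t • A) ^ (2 * k + 1))) =
      ((((2 * k + 1).factorial : ℂ))⁻¹ * t ^ (2 * k + 1)) • (-(A ^ 2)) ^ (k + 1) := by
  rw [hneg (k + 1), smul_pow, smul_smul, mul_smul_comm, smul_smul, ← neg_smul]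
  have hA : A * A ^ (2 * k + 1) = A ^ (2 * (k + 1)) := by
    rw [← pow_succ']
    congr 1
  rw [hA]
  congr 1
  rw [div_eq_mul_inv]
  ring

lemma negASqPow (A : Matrix n n ℂ) (k : ℕ) :
    (-(A ^ 2)) ^ k = ((-1 : ℂ) ^ k) • A ^ (2 * k) := by
  have : -(A ^ 2) = (-1 : ℂ) • A ^ 2 := by simp
  rw [this, smul_pow, ← pow_mul]

end ExpBlockAux

open ExpBlockAux Matrix in
/-- For `M = [[0, I], [-A², 0]]` one has
`exp (tM) = [[cos (tA), s(t,A²-series)], [-A sin(tA), cos (tA)]]`. -/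
theorem exp_block_matrix {n : Type*} [Fintype n] [DecidableEq n] (A : Matrix n n ℂ) (t : ℝ) :
    exp ((t : ℂ) • Matrix.fromBlocks (0 : Matrix n n ℂ) (1 : Matrix n n ℂ) (-(A ^ 2)) 0) =
      Matrix.fromBlocks (mcos ((t : ℂ) • A)) (sFun t A)
        (-(A * msin ((t : ℂ) • A))) (mcos ((t : ℂ) • A)) := by
  letI : SeminormedRing (Matrix n n ℂ) := Matrix.linftyOpSemiNormedRing
  letI : NormedRing (Matrix n n ℂ) := Matrix.linftyOpNormedRing
  letI : NormedAlgebra ℂ (Matrix n n ℂ) := Matrix.linftyOpNormedAlgebra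
  letI : SeminormedRing (Matrix (n ⊕ n) (n ⊕ n) ℂ) := Matrix.linftyOpSemiNormedRing
  letI : NormedRing (Matrix (n ⊕ n) (n ⊕ n) ℂ) := Matrix.linftyOpNormedRing
  letI : NormedAlgebra ℂ (Matrix (n ⊕ n) (n ⊕ n) ℂ) := Matrix.linftyOpNormedAlgebra
  set M : Matrix (n ⊕ n) (n ⊕ n) ℂ := fromBlocks 0 1 (-(A ^ 2)) 0 with hM
  set g : ℕ → Matrix (n ⊕ n) (n ⊕ n) ℂ := fun m => ((m.factorial : ℂ)⁻¹) • ((t : ℂ) • M) ^ m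
    with hg
  -- the exponential series is summable and sums to the exponential
  have hgsum : HasSum g (exp ((t : ℂ) • M)) := exp_series_hasSum_exp' (𝕂 := ℂ) _
  -- term computations
  have hge : ∀ k : ℕ, g (2 * k) =
      fromBlocks ((((2 * k).factorial : ℂ)⁻¹ * (t : ℂ) ^ (2 * k)) • (-(A ^ 2)) ^ k) 0 0
        ((((2 * k).factorial : ℂ)⁻¹ * (t : ℂ) ^ (2 * k)) • (-(A ^ 2)) ^ k) := by
    intro k
    show (((2 * k).factorial : ℂ)⁻¹) • ((t : ℂ) • M) ^ (2 * k) = _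
    rw [smul_pow, hM, M_pow_even, smul_smul, fromBlocks_smul]
    simp
  have hgo : ∀ k : ℕ, g (2 * k + 1) =
      fromBlocks 0 ((((2 * k + 1).factorial : ℂ)⁻¹ * (t : ℂ) ^ (2 * k + 1)) • (-(A ^ 2)) ^ k)
        ((((2 * k + 1).factorial : ℂ)⁻¹ * (t : ℂ) ^ (2 * k + 1)) • (-(A ^ 2)) ^ (k + 1)) 0 := by
    intro k
    show (((2 * k + 1).factorial : ℂ)⁻¹) • ((t : ℂ) • M) ^ (2 * k + 1) = _
    rw [smul_pow, hM, M_pow_odd, smul_smul, fromBlocks_smul]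
    simp
  -- summability of even and odd sub-series
  have h2inj : Function.Injective fun k : ℕ => 2 * k := fun a b h => by
    have : 2 * a = 2 * b := h
    omega
  have h2inj' : Function.Injective fun k : ℕ => 2 * k + 1 := fun a b h => by
    have : 2 * a + 1 = 2 * b + 1 := h
    omega
  have heven : Summable fun k => g (2 * k) := hgsum.summable.comp_injective h2inj
  have hodd : Summable fun k => g (2 * k + 1) := hgsum.summable.comp_injective h2inj'
  -- summability of the block series
  have hb11 : Summable fun k =>
      ((((2 * k).factorial : ℂ))⁻¹ * (t : ℂ) ^ (2 * k)) • (-(A ^ 2)) ^ k := by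
    refine (heven.map (tb11 (n := n)) continuous_tb11).congr fun k => ?_
    show (g (2 * k)).toBlocks₁₁ = _
    rw [hge, toBlocks_fromBlocks₁₁]
  have hb12 : Summable fun k =>
      ((((2 * k + 1).factorial : ℂ))⁻¹ * (t : ℂ) ^ (2 * k + 1)) • (-(A ^ 2)) ^ k := by
    refine (hodd.map (tb12 (n := n)) continuous_tb12).congr fun k => ?_
    show (g (2 * k + 1)).toBlocks₁₂ = _
    rw [hgo, toBlocks_fromBlocks₁₂]
  have hb21 : Summable fun k =>
      ((((2 * k + 1).factorial : ℂ))⁻¹ * (t : ℂ) ^ (2 * k + 1)) • (-(A ^ 2)) ^ (k + 1) := by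
    refine (hodd.map (tb21 (n := n)) continuous_tb21).congr fun k => ?_
    show (g (2 * k + 1)).toBlocks₂₁ = _
    rw [hgo, toBlocks_fromBlocks₂₁]
  -- identification of the block sums
  have h11 : HasSum (fun k =>
      ((((2 * k).factorial : ℂ))⁻¹ * (t : ℂ) ^ (2 * k)) • (-(A ^ 2)) ^ k)
      (mcos ((t : ℂ) • A)) := by
    have : mcos ((t : ℂ) • A) = ∑' k : ℕ,
        ((((2 * k).factorial : ℂ))⁻¹ * (t : ℂ) ^ (2 * k)) • (-(A ^ 2)) ^ k := by
      rw [mcos]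
      refine tsum_congr fun k => ?_
      rw [negASqPow, smul_pow, smul_smul, smul_smul]
      congr 1
      rw [div_eq_mul_inv]
      ring
    rw [this]
    exact hb11.hasSum
  have h12 : HasSum (fun k =>
      ((((2 * k + 1).factorial : ℂ))⁻¹ * (t : ℂ) ^ (2 * k + 1)) • (-(A ^ 2)) ^ k)
      (sFun t A) := by
    have : sFun t A = ∑' k : ℕ,
        ((((2 * k + 1).factorial : ℂ))⁻¹ * (t : ℂ) ^ (2 * k + 1)) • (-(A ^ 2)) ^ k := by
      rw [sFun]
      refine tsum_congr fun k => ?_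
      rw [negASqPow, smul_smul]
      congr 1
      rw [div_eq_mul_inv]
      ring
    rw [this]
    exact hb12.hasSum
  -- the msin series is summable
  have hmsin : Summable fun k : ℕ =>
      ((-1 : ℂ) ^ k / (2 * k + 1).factorial) • ((t : ℂ) • A) ^ (2 * k + 1) := by
    have hexpB := expSeries_summable' (𝕂 := ℂ) (Complex.I • ((t : ℂ) • A))
    have hoddB := hexpB.comp_injective h2inj'
    have := hoddB.const_smul (-Complex.I)
    refine this.congr fun k => ?_
    show (-Complex.I) • ((((2 * k + 1).factorial : ℂ))⁻¹ •
      (Complex.I • ((t : ℂ) • A)) ^ (2 * k + 1)) = _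
    rw [smul_pow, smul_smul, smul_smul]
    congr 1
    have hI : (Complex.I) ^ (2 * k + 1) = (-1 : ℂ) ^ k * Complex.I := by
      rw [pow_succ, pow_mul, Complex.I_sq]
    rw [hI, div_eq_mul_inv]
    ring_nf
    rw [Complex.I_sq]
    ring
  have h21 : HasSum (fun k =>
      ((((2 * k + 1).factorial : ℂ))⁻¹ * (t : ℂ) ^ (2 * k + 1)) • (-(A ^ 2)) ^ (k + 1))
      (-(A * msin ((t : ℂ) • A))) := by
    have key : -(A * msin ((t : ℂ) • A)) = ∑' k : ℕ,
        ((((2 * k + 1).factorial : ℂ))⁻¹ * (t : ℂ) ^ (2 * k + 1)) • (-(A ^ 2)) ^ (k + 1) := by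
      rw [msin, ← hmsin.tsum_mul_left A, ← tsum_neg]
      exact tsum_congr fun k => term21 A (t : ℂ) k (negASqPow A)
    rw [key]
    exact hb21.hasSum
  -- assemble the blocks
  have hEven : HasSum (fun k => g (2 * k))
      (fromBlocks (mcos ((t : ℂ) • A)) 0 0 (mcos ((t : ℂ) • A))) := by
    refine HasSum.congr_fun (hasSum_fromBlocks h11 hasSum_zero hasSum_zero h11) fun k => ?_
    rw [hge]
  have hOdd : HasSum (fun k => g (2 * k + 1))
      (fromBlocks 0 (sFun t A) (-(A * msin ((t : ℂ) • A))) 0) := by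
    refine HasSum.congr_fun (hasSum_fromBlocks hasSum_zero h12 h21 hasSum_zero) fun k => ?_
    rw [hgo]
  have hfinal := hgsum.unique (hEven.even_add_odd hOdd)
  rw [hfinal, fromBlocks_add]
  simp
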